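/- Let f be a probability density on ℝ, symmetric about zero, absolutely continuous with integrable derivative f'. Then for every z ≥ 0 and every θ ∈ ℝ, | ∫_{ {y : |y| > z} } sign(y)·f(y − θ) dy | ≤ |θ|·∫_ℝ |f'(t)| dt. -/

import Mathlib

open MeasureTheory

lemma aux_sign_abs_le (y : ℝ) : |Real.sign y| ≤ 1 := by
  rcases lt_trichotomy y 0 with h | h | h
  · rw [Real.sign_of_neg h]; norm_num
  · simp [h]
  · rw [Real.sign_of_pos h]; norm_num

lemma aux_sign_measurable : Measurable (Real.sign : ℝ → ℝ) := by
  have : (Real.sign : ℝ → ℝ) = fun r => if r < 0 then (-1 : ℝ) else if 0 < r then 1 else 0 :=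
    funext fun r => rfl
  rw [this]
  exact Measurable.ite (measurableSet_lt measurable_id measurable_const) measurable_const
    (Measurable.ite (measurableSet_lt measurable_const measurable_id) measurable_const
      measurable_const)

lemma aux_fubini (f' : ℝ → ℝ) (hf'meas : Measurable f') (hf'int : Integrable f') (θ : ℝ) :
    (∫⁻ y : ℝ, ∫⁻ x in Set.uIoc y (y - θ), ENNReal.ofReal |f' x|)
      ≤ ENNReal.ofReal (|θ| * ∫ t : ℝ, |f' t|) := by
  set F : ℝ → ℝ → ENNReal := fun y x =>
    (Set.uIoc y (y - θ)).indicator (fun x => ENNReal.ofReal |f' x|) x with hF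
  have hA : MeasurableSet {p : ℝ × ℝ | p.2 ∈ Set.uIoc p.1 (p.1 - θ)} := by
    have : {p : ℝ × ℝ | p.2 ∈ Set.uIoc p.1 (p.1 - θ)}
        = {p : ℝ × ℝ | min p.1 (p.1 - θ) < p.2} ∩ {p : ℝ × ℝ | p.2 ≤ max p.1 (p.1 - θ)} := by
      ext p; simp [Set.uIoc, Set.mem_Ioc, Set.mem_setOf_eq, Set.mem_inter_iff]
    rw [this]
    exact (measurableSet_lt (measurable_fst.min (measurable_fst.sub measurable_const))
        measurable_snd).inter
      (measurableSet_le measurable_snd (measurable_fst.max (measurable_fst.sub measurable_const)))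
  have hFmeas : Measurable (Function.uncurry F) := by
    have : Function.uncurry F =
        ({p : ℝ × ℝ | p.2 ∈ Set.uIoc p.1 (p.1 - θ)}).indicator
          (fun p => ENNReal.ofReal |f' p.2|) := by
      ext p
      simp only [Function.uncurry, hF, Set.indicator]
      by_cases h : p.2 ∈ Set.uIoc p.1 (p.1 - θ) <;> simp [h]
    rw [this]
    exact (((hf'meas.comp measurable_snd).abs).ennreal_ofReal).indicator hA
  refine le_of_eq ?_
  calc (∫⁻ y : ℝ, ∫⁻ x in Set.uIoc y (y - θ), ENNReal.ofReal |f' x|)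
      = ∫⁻ y : ℝ, ∫⁻ x : ℝ, F y x := by
        refine lintegral_congr fun y => ?_
        rw [hF, lintegral_indicator measurableSet_uIoc]
    _ = ∫⁻ x : ℝ, ∫⁻ y : ℝ, F y x := lintegral_lintegral_swap hFmeas.aemeasurable
    _ = ∫⁻ x : ℝ, ENNReal.ofReal |f' x| * ENNReal.ofReal |θ| := by
        refine lintegral_congr fun x => ?_
        have hset : {y : ℝ | x ∈ Set.uIoc y (y - θ)}
            = Set.Ico (x + min θ 0) (x + max θ 0) := by
          ext y
          simp only [Set.mem_uIoc, Set.mem_setOf_eq, Set.mem_Ico]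
          rcases le_total (0 : ℝ) θ with h | h
          · rw [min_eq_right h, max_eq_left h]
            constructor
            · rintro (⟨h1, h2⟩ | ⟨h1, h2⟩) <;> constructor <;> linarith
            · rintro ⟨h1, h2⟩; right; constructor <;> linarith
          · rw [min_eq_left h, max_eq_right h]
            constructor
            · rintro (⟨h1, h2⟩ | ⟨h1, h2⟩) <;> constructor <;> linarith
            · rintro ⟨h1, h2⟩; left; constructor <;> linarith
        have : ∀ y : ℝ, F y x
            = ({y : ℝ | x ∈ Set.uIoc y (y - θ)}).indicator
                (fun _ => ENNReal.ofReal |f' x|) y := by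
          intro y
          simp only [hF, Set.indicator]
          by_cases h : x ∈ Set.uIoc y (y - θ) <;> simp [h]
        simp_rw [this, hset]
        rw [lintegral_indicator_const measurableSet_Ico, Real.volume_Ico]
        congr 1
        rcases le_total (0 : ℝ) θ with h | h
        · rw [min_eq_right h, max_eq_left h, abs_of_nonneg h]; ring_nf
        · rw [min_eq_left h, max_eq_right h, abs_of_nonpos h]; ring_nf
    _ = (∫⁻ x : ℝ, ENNReal.ofReal |f' x|) * ENNReal.ofReal |θ| :=
        lintegral_mul_const _ (hf'meas.abs.ennreal_ofReal)
    _ = ENNReal.ofReal (|θ| * ∫ t : ℝ, |f' t|) := by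
        rw [← ofReal_integral_eq_lintegral_ofReal hf'int.abs
          (Filter.Eventually.of_forall fun x => abs_nonneg _)]
        rw [← ENNReal.ofReal_mul (integral_nonneg fun x => abs_nonneg _)]
        rw [mul_comm]

theorem shifted_tail_sign_integral_bound
    (f f' : ℝ → ℝ)
    (hfnn : ∀ x, 0 ≤ f x) (hfint : Integrable f)
    (hfprob : ∫ x, f x = 1)
    (hfsymm : ∀ x, f (-x) = f x)
    (hac : ∀ a b : ℝ, f b - f a = ∫ x in a..b, f' x)
    (hf'meas : Measurable f')
    (hf'int : Integrable f')
    (z : ℝ) (hz : 0 ≤ z) (θ : ℝ) :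
    |∫ y in {y : ℝ | z < |y|}, Real.sign y * f (y - θ)| ≤ |θ| * ∫ t : ℝ, |f' t| := by
  set S : Set ℝ := {y : ℝ | z < |y|} with hSdef
  have hSmeas : MeasurableSet S := (isOpen_lt continuous_const continuous_abs).measurableSet
  -- f is continuous
  have hfcont : Continuous f := by
    have h1 : Continuous fun b => ∫ x in (0 : ℝ)..b, f' x := hf'int.continuous_primitive 0
    have h2 : f = fun b => f 0 + ∫ x in (0 : ℝ)..b, f' x := by
      funext b; have := hac 0 b; linarith
    rw [h2]; exact continuous_const.add h1
  -- integrability facts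
  have hft : Integrable (fun y => f (y - θ)) := hfint.comp_sub_right θ
  have hΔint : Integrable (fun y => f (y - θ) - f y) := hft.sub hfint
  have hsbound : ∃ C : ℝ, ∀ x : ℝ, ‖Real.sign x‖ ≤ C :=
    ⟨1, fun x => by simpa [Real.norm_eq_abs] using aux_sign_abs_le x⟩
  have h1 : Integrable (fun y => Real.sign y * f (y - θ)) :=
    hft.bdd_mul aux_sign_measurable.aestronglyMeasurable
      (Filter.Eventually.of_forall hsbound.choose_spec)
  have h0 : Integrable (fun y => Real.sign y * f y) :=
    hfint.bdd_mul aux_sign_measurable.aestronglyMeasurable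
      (Filter.Eventually.of_forall hsbound.choose_spec)
  have hg : Integrable (fun y => Real.sign y * (f (y - θ) - f y)) :=
    hΔint.bdd_mul aux_sign_measurable.aestronglyMeasurable
      (Filter.Eventually.of_forall hsbound.choose_spec)
  -- the symmetric part vanishes
  have hzero : ∫ y in S, Real.sign y * f y = 0 := by
    set G : ℝ → ℝ := S.indicator (fun y => Real.sign y * f y) with hG
    have hrw : ∫ y in S, Real.sign y * f y = ∫ y : ℝ, G y :=
      (integral_indicator hSmeas).symm
    have hodd : ∀ y : ℝ, G (-y) = -G y := by
      intro y
      by_cases h : y ∈ S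
      · have h' : -y ∈ S := by
          simp only [hSdef, Set.mem_setOf_eq, abs_neg] at h ⊢; exact h
        rw [hG, Set.indicator_of_mem h', Set.indicator_of_mem h, Real.sign_neg, hfsymm, neg_mul]
      · have h' : -y ∉ S := by
          simp only [hSdef, Set.mem_setOf_eq, abs_neg] at h ⊢; exact h
        rw [hG, Set.indicator_of_notMem h', Set.indicator_of_notMem h, neg_zero]
    have hneg := integral_neg_eq_self G (volume : Measure ℝ)
    simp_rw [hodd] at hneg
    rw [integral_neg] at hneg
    rw [hrw]; linarith
  -- split the integral
  have hsub : ∫ y in S, Real.sign y * (f (y - θ) - f y)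
      = (∫ y in S, Real.sign y * f (y - θ)) - ∫ y in S, Real.sign y * f y := by
    simp_rw [mul_sub]
    exact integral_sub h1.integrableOn h0.integrableOn
  have hmain : ∫ y in S, Real.sign y * f (y - θ)
      = ∫ y in S, Real.sign y * (f (y - θ) - f y) := by
    rw [hsub, hzero, sub_zero]
  rw [hmain]
  -- bound by the L1 norm of the difference
  have hb1 : |∫ y in S, Real.sign y * (f (y - θ) - f y)|
      ≤ ∫ y : ℝ, |f (y - θ) - f y| := by
    calc |∫ y in S, Real.sign y * (f (y - θ) - f y)|
        ≤ ∫ y in S, |Real.sign y * (f (y - θ) - f y)| := by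
          simpa only [Real.norm_eq_abs] using
            norm_integral_le_integral_norm (μ := volume.restrict S)
              (fun y => Real.sign y * (f (y - θ) - f y))
      _ ≤ ∫ y in S, |f (y - θ) - f y| := by
          refine integral_mono hg.abs.integrableOn hΔint.abs.integrableOn fun y => ?_
          rw [abs_mul]
          calc |Real.sign y| * |f (y - θ) - f y|
              ≤ 1 * |f (y - θ) - f y| :=
                mul_le_mul_of_nonneg_right (aux_sign_abs_le y) (abs_nonneg _)
            _ = |f (y - θ) - f y| := one_mul _
      _ ≤ ∫ y : ℝ, |f (y - θ) - f y| :=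
          setIntegral_le_integral hΔint.abs (Filter.Eventually.of_forall fun y => abs_nonneg _)
  refine hb1.trans ?_
  -- the key L1 translation bound
  have habs_cont : Continuous fun y => |f (y - θ) - f y| :=
    ((hfcont.comp (continuous_id.sub continuous_const)).sub hfcont).abs
  have hstep : ∀ y : ℝ, ENNReal.ofReal |f (y - θ) - f y|
      ≤ ∫⁻ x in Set.uIoc y (y - θ), ENNReal.ofReal |f' x| := by
    intro y
    have e1 : f (y - θ) - f y = ∫ x in y..(y - θ), f' x := hac y (y - θ)
    have e2 : |f (y - θ) - f y| ≤ ∫ x in Set.uIoc y (y - θ), |f' x| := by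
      rw [e1]
      simpa [Real.norm_eq_abs] using
        intervalIntegral.norm_integral_le_integral_norm_uIoc
          (a := y) (b := y - θ) (f := f') (μ := volume)
    calc ENNReal.ofReal |f (y - θ) - f y|
        ≤ ENNReal.ofReal (∫ x in Set.uIoc y (y - θ), |f' x|) := ENNReal.ofReal_le_ofReal e2
      _ = ∫⁻ x in Set.uIoc y (y - θ), ENNReal.ofReal |f' x| :=
          ofReal_integral_eq_lintegral_ofReal hf'int.abs.integrableOn
            (Filter.Eventually.of_forall fun x => abs_nonneg _)
  have heq : ∫ y : ℝ, |f (y - θ) - f y|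
      = (∫⁻ y : ℝ, ENNReal.ofReal |f (y - θ) - f y|).toReal :=
    integral_eq_lintegral_of_nonneg_ae (Filter.Eventually.of_forall fun y => abs_nonneg _)
      habs_cont.aestronglyMeasurable
  rw [heq]
  have hle : (∫⁻ y : ℝ, ENNReal.ofReal |f (y - θ) - f y|)
      ≤ ENNReal.ofReal (|θ| * ∫ t : ℝ, |f' t|) :=
    le_trans (lintegral_mono hstep) (aux_fubini f' hf'meas hf'int θ)
  calc (∫⁻ y : ℝ, ENNReal.ofReal |f (y - θ) - f y|).toReal
      ≤ (ENNReal.ofReal (|θ| * ∫ t : ℝ, |f' t|)).toReal :=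
        ENNReal.toReal_mono ENNReal.ofReal_ne_top hle
    _ = |θ| * ∫ t : ℝ, |f' t| :=
        ENNReal.toReal_ofReal (mul_nonneg (abs_nonneg _) (integral_nonneg fun t => abs_nonneg _))
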